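/- Let (X,d) be a compact metric space such that for every pair of points x, x' ∈ X there exists a closed connected subset C ⊆ X containing both x and x' whose Hausdorff dimension equals 1. Then for every p ∈ (1,∞) and all x, x' ∈ X one has d^{(p)}(x,x') = 0; that is, every compact 1-connected metric space lies in the kernel of the projection 𝔖_p for every p > 1. -/

import Mathlib

noncomputable section

private lemma list_sum_getD (f : ℕ → ℝ) (d : ℕ) :
    ∀ l : List ℕ, ∑ k ∈ Finset.range l.length, f (l.getD k d) = (l.map f).sum
  | [] => by simp
  | a :: l => by
    rw [List.length_cons, Finset.sum_range_succ']
    simp only [List.getD_cons_succ, List.getD_cons_zero, List.map_cons, List.sum_cons]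
    rw [list_sum_getD f d l]; ring

private lemma add_rpow_le {p u v : ℝ} (hp : 0 ≤ p) (hu : 0 ≤ u) (hv : 0 ≤ v) :
    (u + v) ^ p ≤ 2 ^ p * (u ^ p + v ^ p) := by
  have hmax : u + v ≤ 2 * max u v := by
    rcases le_total u v with h | h
    · rw [max_eq_right h]; linarith
    · rw [max_eq_left h]; linarith
  have h0 : (0:ℝ) ≤ max u v := le_max_of_le_left hu
  calc (u + v) ^ p ≤ (2 * max u v) ^ p :=
        Real.rpow_le_rpow (by linarith) hmax hp
    _ = 2 ^ p * (max u v) ^ p := Real.mul_rpow (by norm_num) h0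
    _ ≤ 2 ^ p * (u ^ p + v ^ p) := by
        have h2 : (0:ℝ) ≤ 2 ^ p := Real.rpow_nonneg (by norm_num) p
        have : (max u v) ^ p ≤ u ^ p + v ^ p := by
          rcases le_total u v with h | h
          · rw [max_eq_right h]
            have := Real.rpow_nonneg hu p; linarith
          · rw [max_eq_left h]
            have := Real.rpow_nonneg hv p; linarith
        nlinarith

private lemma walk_support_mem {G : SimpleGraph ℕ} {F : Finset ℕ}
    (hG : ∀ {a b : ℕ}, G.Adj a b → a ∈ F ∧ b ∈ F) :
    ∀ {i j : ℕ} (w : G.Walk i j), i ∈ F → ∀ v ∈ w.support, v ∈ F := by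
  intro i j w
  induction w with
  | nil =>
    intro hi v hv
    simp only [SimpleGraph.Walk.support_nil, List.mem_singleton] at hv
    subst hv; exact hi
  | cons h w ih =>
    intro hi v hv
    rw [SimpleGraph.Walk.support_cons] at hv
    rcases List.mem_cons.mp hv with rfl | hv
    · exact hi
    · exact ih (hG h).2 v hv

noncomputable section
open MeasureTheory ENNReal NNReal

set_option maxHeartbeats 1000000 in
private lemma exists_chain_small {X : Type} [MetricSpace X] [CompactSpace X] {C : Set X}
    (hCclosed : IsClosed C) (hCconn : IsConnected C) {x x' : X}
    (hxC : x ∈ C) (hx'C : x' ∈ C) (hdim : dimH C = 1) {p : ℝ} (hp : 1 < p)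
    {ε : ℝ} (hε : 0 < ε) :
    ∃ n : ℕ, ∃ c : ℕ → X, c 0 = x ∧ c n = x' ∧
      ∑ i ∈ Finset.range n, dist (c i) (c (i + 1)) ^ p ≤ ε := by
  classical
  borelize X
  have hp0 : (0:ℝ) < p := by linarith
  set s : ℝ := (p + 1) / 2 with hs_def
  have hs1 : 1 < s := by rw [hs_def]; linarith
  have hsp : s < p := by rw [hs_def]; linarith
  have hs0 : (0:ℝ) < s := by linarith
  have h2p0 : (0:ℝ) < 2 ^ p := Real.rpow_pos_of_pos (by norm_num) p
  have h2p1 : (1:ℝ) ≤ 2 ^ p := Real.one_le_rpow (by norm_num) hp0.le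
  set B : ℝ := 3 * 2 ^ p * 2 ^ p with hB_def
  have hB0 : (0:ℝ) < B := by rw [hB_def]; positivity
  set η : ℝ := min 1 (ε / (2 * B)) with hη_def
  have hη0 : 0 < η := lt_min one_pos (by positivity)
  have hη1 : η ≤ 1 := min_le_left _ _
  have hηε : η ≤ ε / (2 * B) := min_le_right _ _
  -- get a cover with small sum of diam^s
  have hcover_ex : ∃ t : ℕ → Set X, C ⊆ (⋃ n, t n) ∧
      (∀ n, EMetric.diam (t n) ≤ ENNReal.ofReal 1) ∧
      (∑' n, ⨆ _ : (t n).Nonempty, EMetric.diam (t n) ^ s) < ENNReal.ofReal η := by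
    have hμ : μH[s] C = 0 := by
      have h : dimH C < (s.toNNReal : ℝ≥0∞) := by
        rw [hdim]
        have : (1:ℝ≥0) < s.toNNReal := by
          rw [← Real.toNNReal_one]
          exact (Real.toNNReal_lt_toNNReal_iff (by linarith)).mpr hs1
        exact_mod_cast this
      have := hausdorffMeasure_of_dimH_lt h
      rwa [Real.coe_toNNReal s hs0.le] at this
    have happ := MeasureTheory.Measure.hausdorffMeasure_apply s C
    rw [hμ] at happ
    have hinf : (⨅ (t : ℕ → Set X) (_ : C ⊆ ⋃ n, t n)
        (_ : ∀ n, EMetric.diam (t n) ≤ ENNReal.ofReal 1),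
        ∑' n, ⨆ _ : (t n).Nonempty, EMetric.diam (t n) ^ s) = 0 := by
      refine le_antisymm ?_ zero_le
      rw [happ]
      exact le_iSup₂ (f := fun (r : ℝ≥0∞) (_ : 0 < r) =>
        ⨅ (t : ℕ → Set X) (_ : C ⊆ ⋃ n, t n) (_ : ∀ n, EMetric.diam (t n) ≤ r),
          ∑' n, ⨆ _ : (t n).Nonempty, EMetric.diam (t n) ^ s)
        (ENNReal.ofReal 1) (by simp)
    have hlt : (⨅ (t : ℕ → Set X) (_ : C ⊆ ⋃ n, t n)
        (_ : ∀ n, EMetric.diam (t n) ≤ ENNReal.ofReal 1),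
        ∑' n, ⨆ _ : (t n).Nonempty, EMetric.diam (t n) ^ s) < ENNReal.ofReal η := by
      rw [hinf]; simp [hη0]
    obtain ⟨t, ht⟩ := iInf_lt_iff.mp hlt
    obtain ⟨h1, ht⟩ := iInf_lt_iff.mp ht
    obtain ⟨h2, ht⟩ := iInf_lt_iff.mp ht
    exact ⟨t, h1, h2, ht⟩
  obtain ⟨t, hcover, hdiam, hsum⟩ := hcover_ex
  -- real radii and centers
  set e : ℕ → ℝ := fun n => (EMetric.diam (t n)).toReal with he_def
  have he0 : ∀ n, 0 ≤ e n := fun n => ENNReal.toReal_nonneg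
  have hetop : ∀ n, EMetric.diam (t n) ≠ ⊤ := fun n =>
    ne_top_of_le_ne_top ENNReal.ofReal_ne_top (hdiam n)
  have he1 : ∀ n, e n ≤ 1 := by
    intro n
    have h := ENNReal.toReal_mono ENNReal.ofReal_ne_top (hdiam n)
    rwa [ENNReal.toReal_ofReal (by norm_num)] at h
  set q : ℕ → ℝ := fun n => (1/2 : ℝ) ^ (n + 1) with hq_def
  have hq0 : ∀ n, 0 < q n := fun n => by rw [hq_def]; positivity
  have hq1 : ∀ n, q n ≤ 1 := fun n => by
    rw [hq_def]
    exact pow_le_one₀ (by norm_num) (by norm_num)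
  set r : ℕ → ℝ := fun n => e n + η * q n with hr_def
  have hr0 : ∀ n, 0 < r n := fun n => by
    have := he0 n; have := hq0 n
    rw [hr_def]; dsimp only; nlinarith
  set y : ℕ → X := fun n => if h : (t n).Nonempty then h.choose else x with hy_def
  have hball : ∀ n, ∀ z ∈ t n, z ∈ Metric.ball (y n) (r n) := by
    intro n z hz
    have hne : (t n).Nonempty := ⟨z, hz⟩
    have hy : y n ∈ t n := by rw [hy_def]; dsimp only; rw [dif_pos hne]; exact hne.choose_spec
    rw [Metric.mem_ball, dist_comm]
    have h1 : edist (y n) z ≤ EMetric.diam (t n) := EMetric.edist_le_diam_of_mem hy hz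
    have h2 : dist (y n) z ≤ e n := by
      rw [dist_edist]
      exact ENNReal.toReal_mono (hetop n) h1
    have := hq0 n
    have : 0 < η * q n := by positivity
    rw [hr_def]; dsimp only; linarith
  -- finite subcover
  have hCcomp : IsCompact C := hCclosed.isCompact
  obtain ⟨F, hF⟩ := hCcomp.elim_finite_subcover (fun n => Metric.ball (y n) (r n))
    (fun n => Metric.isOpen_ball) (fun z hz => by
      obtain ⟨n, hn⟩ := Set.mem_iUnion.mp (hcover hz)
      exact Set.mem_iUnion.mpr ⟨n, hball n z hn⟩)
  have hFmem : ∀ z ∈ C, ∃ i ∈ F, z ∈ Metric.ball (y i) (r i) := by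
    intro z hz
    obtain ⟨i, hmem⟩ := Set.mem_iUnion.mp (hF hz)
    obtain ⟨hiF, hzi⟩ := Set.mem_iUnion.mp hmem
    exact ⟨i, hiF, hzi⟩
  -- bound on ∑_{n ∈ F} r n ^ p
  -- bound on ∑_{n ∈ F} r n ^ p
  have hqs : ∑ m ∈ F, q m ≤ 1 := by
    obtain ⟨N, hN⟩ := F.exists_nat_subset_range
    have h1 : ∑ m ∈ F, q m ≤ ∑ m ∈ Finset.range N, q m :=
      Finset.sum_le_sum_of_subset_of_nonneg hN (fun m _ _ => (hq0 m).le)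
    have h2 : ∑ m ∈ Finset.range N, q m = (∑ m ∈ Finset.range N, (1/2:ℝ) ^ m) * (1/2) := by
      rw [Finset.sum_mul]
      refine Finset.sum_congr rfl fun i _ => ?_
      rw [hq_def]; dsimp only; rw [pow_succ]
    have h3 := sum_geometric_two_le N
    rw [h2] at h1
    nlinarith
  have hes : ∑ m ∈ F, e m ^ s ≤ η := by
    have hterm : ∀ m, e m ^ s ≤ (⨆ _ : (t m).Nonempty, EMetric.diam (t m) ^ s).toReal := by
      intro m
      by_cases hne : (t m).Nonempty
      · rw [iSup_pos hne, ← ENNReal.toReal_rpow]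
      · have hempty : t m = ∅ := Set.not_nonempty_iff_eq_empty.mp hne
        have : e m = 0 := by rw [he_def]; dsimp only; rw [hempty]; simp [EMetric.diam]
        rw [this, Real.zero_rpow hs0.ne']
        simp
    have hne_top : ∀ m ∈ F, (⨆ _ : (t m).Nonempty, EMetric.diam (t m) ^ s) ≠ ∞ := by
      intro m _
      have h1 : (⨆ _ : (t m).Nonempty, EMetric.diam (t m) ^ s) ≤ EMetric.diam (t m) ^ s :=
        iSup_le fun _ => le_rfl
      exact ne_top_of_le_ne_top (ENNReal.rpow_ne_top_of_nonneg hs0.le (hetop m)) h1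
    calc ∑ m ∈ F, e m ^ s
        ≤ ∑ m ∈ F, (⨆ _ : (t m).Nonempty, EMetric.diam (t m) ^ s).toReal :=
          Finset.sum_le_sum fun m _ => hterm m
      _ = (∑ m ∈ F, ⨆ _ : (t m).Nonempty, EMetric.diam (t m) ^ s).toReal :=
          (ENNReal.toReal_sum hne_top).symm
      _ ≤ (ENNReal.ofReal η).toReal := by
          refine ENNReal.toReal_mono ENNReal.ofReal_ne_top ?_
          exact (ENNReal.sum_le_tsum F).trans hsum.le
      _ = η := ENNReal.toReal_ofReal hη0.le
  have hS : ∑ m ∈ F, r m ^ p ≤ 2 ^ p * (η + η) := by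
    have hrp : ∀ m, r m ^ p ≤ 2 ^ p * (e m ^ s + η * q m) := by
      intro m
      have h1 : r m ^ p ≤ 2 ^ p * (e m ^ p + (η * q m) ^ p) := by
        have := add_rpow_le (p := p) hp0.le (he0 m) (u := e m)
          (v := η * q m) (by positivity)
        rw [hr_def]; exact this
      have h2 : e m ^ p ≤ e m ^ s :=
        Real.rpow_le_rpow_of_exponent_ge' (he0 m) (he1 m) hs0.le hsp.le
      have h3 : (η * q m) ^ p ≤ η * q m := by
        rw [Real.mul_rpow hη0.le (hq0 m).le]
        have ha : η ^ p ≤ η := by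
          have := Real.rpow_le_rpow_of_exponent_ge' hη0.le hη1 one_pos.le hp.le
          rwa [Real.rpow_one] at this
        have hb : q m ^ p ≤ q m := by
          have := Real.rpow_le_rpow_of_exponent_ge' (hq0 m).le (hq1 m) one_pos.le hp.le
          rwa [Real.rpow_one] at this
        exact mul_le_mul ha hb (Real.rpow_nonneg (hq0 m).le p) hη0.le
      nlinarith
    calc ∑ m ∈ F, r m ^ p ≤ ∑ m ∈ F, 2 ^ p * (e m ^ s + η * q m) :=
          Finset.sum_le_sum fun m _ => hrp m
      _ = 2 ^ p * ((∑ m ∈ F, e m ^ s) + η * ∑ m ∈ F, q m) := by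
          rw [← Finset.mul_sum, Finset.sum_add_distrib, ← Finset.mul_sum]
      _ ≤ 2 ^ p * (η + η) := by
          have hx : (∑ m ∈ F, e m ^ s) + η * ∑ m ∈ F, q m ≤ η + η := by
            nlinarith [mul_le_mul_of_nonneg_left hqs hη0.le]
          exact mul_le_mul_of_nonneg_left hx h2p0.le
  -- intersection graph of the balls
  set G : SimpleGraph ℕ :=
    { Adj := fun i j => i ≠ j ∧ i ∈ F ∧ j ∈ F ∧
        ∃ z, z ∈ Metric.ball (y i) (r i) ∧ z ∈ Metric.ball (y j) (r j)
      symm := ⟨by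
        rintro i j ⟨hne, hi, hj, z, h1, h2⟩
        exact ⟨hne.symm, hj, hi, z, h2, h1⟩⟩
      loopless := ⟨fun i h => h.1 rfl⟩ } with hG_def
  have hGAdj : ∀ i j : ℕ, G.Adj i j ↔ (i ≠ j ∧ i ∈ F ∧ j ∈ F ∧
      ∃ z, z ∈ Metric.ball (y i) (r i) ∧ z ∈ Metric.ball (y j) (r j)) :=
    fun i j => Iff.rfl
  obtain ⟨i₀, hi₀F, hxball⟩ := hFmem x hxC
  have hreach : ∃ j ∈ F, G.Reachable i₀ j ∧ x' ∈ Metric.ball (y j) (r j) := by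
    by_contra hcon
    push_neg at hcon
    set A : Set X := ⋃ j ∈ {j : ℕ | j ∈ F ∧ G.Reachable i₀ j},
      Metric.ball (y j) (r j) with hA_def
    set Bs : Set X := ⋃ j ∈ {j : ℕ | j ∈ F ∧ ¬ G.Reachable i₀ j},
      Metric.ball (y j) (r j) with hBs_def
    have hAopen : IsOpen A := isOpen_biUnion fun _ _ => Metric.isOpen_ball
    have hBopen : IsOpen Bs := isOpen_biUnion fun _ _ => Metric.isOpen_ball
    have hcov : C ⊆ A ∪ Bs := by
      intro z hz
      obtain ⟨j, hjF, hj⟩ := hFmem z hz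
      by_cases hrj : G.Reachable i₀ j
      · exact Or.inl (Set.mem_biUnion
          (show j ∈ {j : ℕ | j ∈ F ∧ G.Reachable i₀ j} from ⟨hjF, hrj⟩) hj)
      · exact Or.inr (Set.mem_biUnion
          (show j ∈ {j : ℕ | j ∈ F ∧ ¬ G.Reachable i₀ j} from ⟨hjF, hrj⟩) hj)
    have hxA : (C ∩ A).Nonempty :=
      ⟨x, hxC, Set.mem_biUnion
        (show i₀ ∈ {j : ℕ | j ∈ F ∧ G.Reachable i₀ j} from
          ⟨hi₀F, SimpleGraph.Reachable.refl i₀⟩) hxball⟩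
    have hx'B : (C ∩ Bs).Nonempty := by
      obtain ⟨j, hjF, hj⟩ := hFmem x' hx'C
      refine ⟨x', hx'C, Set.mem_biUnion
        (show j ∈ {j : ℕ | j ∈ F ∧ ¬ G.Reachable i₀ j} from ⟨hjF, fun hrj => ?_⟩) hj⟩
      exact hcon j hjF hrj hj
    obtain ⟨z, hzC, hzA, hzB⟩ := hCconn.isPreconnected A Bs hAopen hBopen hcov hxA hx'B
    obtain ⟨i, hi, hzi⟩ := Set.mem_iUnion₂.mp hzA
    obtain ⟨j, hj, hzj⟩ := Set.mem_iUnion₂.mp hzB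
    have hij : i ≠ j := by rintro rfl; exact hj.2 hi.2
    exact hj.2 (hi.2.trans (SimpleGraph.Adj.reachable
      ((hGAdj i j).mpr ⟨hij, hi.1, hj.1, z, hzi, hzj⟩)))
  obtain ⟨j₁, hj₁F, hreach₁, hx'ball⟩ := hreach
  obtain ⟨w0⟩ := hreach₁
  set P : G.Walk i₀ j₁ := (w0.toPath : G.Path i₀ j₁).1 with hP_def
  have hnd : P.support.Nodup := (w0.toPath).2.support_nodup
  have hsupF : ∀ v ∈ P.support, v ∈ F :=
    walk_support_mem (fun {a b} h => ⟨((hGAdj a b).mp h).2.1, ((hGAdj a b).mp h).2.2.1⟩)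
      P hi₀F
  -- build the chain from the path
  set n : ℕ := P.length with hn_def
  have hlen : P.support.length = n + 1 := P.length_support
  set c : ℕ → X := fun k => (x :: P.support.map y).getD k x' with hc_def
  set a : ℕ → ℝ := fun k => r (P.support.getD k j₁) with ha_def
  have ha0 : ∀ k, 0 ≤ a k := fun k => (hr0 _).le
  have hsup0 : P.support.getD 0 j₁ = i₀ := by
    rw [P.support_eq_cons]; rfl
  have hsupn : P.support.getD n j₁ = j₁ := by
    have h := P.getLast_support
    rw [List.getLast_eq_getElem] at h
    rw [List.getD_eq_getElem _ _ (by omega)]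
    convert h using 2
    omega
  have hsupn1 : P.support.getD (n + 1) j₁ = j₁ := by
    apply List.getD_eq_default
    omega
  have hc0 : c 0 = x := rfl
  have hcend : c (n + 2) = x' := by
    rw [hc_def]; dsimp only
    apply List.getD_eq_default
    simp only [List.length_cons, List.length_map, hlen]
    omega
  have hck : ∀ k, k < n + 1 → c (k + 1) = y (P.support.getD k j₁) := by
    intro k hk
    rw [hc_def]; dsimp only
    rw [List.getD_cons_succ]
    rw [List.getD_eq_getElem _ _ (by rw [List.length_map, hlen]; omega),
      List.getElem_map, ← List.getD_eq_getElem _ _ (by omega)]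
  set a' : ℕ → ℝ := fun k => if k = 0 then 0 else a (k - 1) with ha'_def
  have ha'0 : ∀ k, 0 ≤ a' k := by
    intro k
    rw [ha'_def]; dsimp only
    split
    · exact le_refl 0
    · exact ha0 _
  have hterm : ∀ k, k < n + 2 → dist (c k) (c (k + 1)) ^ p ≤
      2 ^ p * (a' k ^ p + a' (k + 1) ^ p) := by
    intro k hk
    rcases Nat.eq_zero_or_pos k with rfl | hk0
    · have h1 : c 1 = y i₀ := by rw [hck 0 (by omega), hsup0]
      have ha'1 : a' 1 = r i₀ := by
        rw [ha'_def]; dsimp only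
        rw [if_neg one_ne_zero, ha_def]; dsimp only
        rw [hsup0]
      have hdlt : dist (c 0) (c 1) < a' 1 := by
        rw [hc0, h1, ha'1]
        exact Metric.mem_ball.mp hxball
      have h2 : dist (c 0) (c 1) ^ p ≤ a' 1 ^ p :=
        Real.rpow_le_rpow dist_nonneg hdlt.le hp0.le
      have h3 : (0:ℝ) ≤ a' 1 ^ p := Real.rpow_nonneg (ha'0 1) p
      have h4 : a' 0 ^ p = 0 := by
        rw [ha'_def]; dsimp only; rw [if_pos rfl]
        exact Real.zero_rpow hp0.ne'
      rw [h4]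
      nlinarith
    rcases Nat.lt_or_ge k (n + 1) with hkn | hkn
    · -- middle steps
      obtain ⟨m, rfl⟩ : ∃ m, k = m + 1 := ⟨k - 1, by omega⟩
      have hu : c (m + 1) = y (P.support.getD m j₁) := hck m (by omega)
      have hv : c (m + 1 + 1) = y (P.support.getD (m + 1) j₁) := hck (m + 1) hkn
      have hlt1 : m < P.support.length := by omega
      have hlt2 : m + 1 < P.support.length := by omega
      have hadj : G.Adj (P.support.getD m j₁) (P.support.getD (m + 1) j₁) := by
        have h := List.isChain_iff_getElem.mp P.isChain_adj_support m (by omega)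
        rw [List.getD_eq_getElem _ _ hlt1, List.getD_eq_getElem _ _ hlt2]
        exact h
      obtain ⟨hne, huF, hvF, z, hz1, hz2⟩ := (hGAdj _ _).mp hadj
      have hdist : dist (c (m + 1)) (c (m + 1 + 1)) <
          a m + a (m + 1) := by
        rw [hu, hv]
        have t1 := Metric.mem_ball.mp hz1
        have t2 := Metric.mem_ball.mp hz2
        have t3 := dist_triangle (y (P.support.getD m j₁)) z
          (y (P.support.getD (m + 1) j₁))
        rw [dist_comm _ z] at t3
        have e1 : a m = r (P.support.getD m j₁) := rfl
        have e2 : a (m + 1) = r (P.support.getD (m + 1) j₁) := rfl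
        rw [e1, e2]
        linarith
      have h1 : dist (c (m + 1)) (c (m + 1 + 1)) ^ p ≤ (a m + a (m + 1)) ^ p :=
        Real.rpow_le_rpow dist_nonneg hdist.le hp0.le
      have h2 := add_rpow_le (p := p) hp0.le (ha0 m) (ha0 (m + 1))
      have e1 : a' (m + 1) = a m := by
        simp [ha'_def]
      have e2 : a' (m + 1 + 1) = a (m + 1) := by
        simp [ha'_def]
      rw [e1, e2]
      linarith
    · -- last step
      have hk' : k = n + 1 := by omega
      subst hk'
      have h1 : c (n + 1) = y j₁ := by rw [hck n (by omega), hsupn]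
      have ha'n2 : a' (n + 2) = r j₁ := by
        rw [ha'_def]; dsimp only
        rw [if_neg (by omega)]
        rw [ha_def]; dsimp only
        rw [show n + 2 - 1 = n + 1 from by omega, hsupn1]
      have hdlt : dist (c (n + 1)) (c (n + 2)) < a' (n + 2) := by
        rw [h1, hcend, ha'n2, dist_comm]
        exact Metric.mem_ball.mp hx'ball
      have h2 : dist (c (n + 1)) (c (n + 2)) ^ p ≤ a' (n + 2) ^ p :=
        Real.rpow_le_rpow dist_nonneg hdlt.le hp0.le
      have h3 : (0:ℝ) ≤ a' (n + 1) ^ p := Real.rpow_nonneg (ha'0 _) p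
      have h4 : (0:ℝ) ≤ a' (n + 2) ^ p := Real.rpow_nonneg (ha'0 _) p
      nlinarith
  -- sum the bounds
  have hsum1 : ∑ k ∈ Finset.range (n + 2), a' k ^ p = ∑ k ∈ Finset.range (n + 1), a k ^ p := by
    rw [Finset.sum_range_succ']
    have h0 : a' 0 ^ p = 0 := by
      rw [ha'_def]; dsimp only; rw [if_pos rfl]; exact Real.zero_rpow hp0.ne'
    rw [h0, add_zero]
    refine Finset.sum_congr rfl fun k _ => ?_
    congr 1
  have hsum2 : ∑ k ∈ Finset.range (n + 2), a' (k + 1) ^ p =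
      (∑ k ∈ Finset.range (n + 1), a k ^ p) + a (n + 1) ^ p := by
    have h : ∀ k : ℕ, a' (k + 1) ^ p = a k ^ p := by
      intro k
      congr 1
    simp_rw [h]
    rw [Finset.sum_range_succ]
  have hanp : a (n + 1) = a n := by
    rw [ha_def]; dsimp only; rw [hsupn1, hsupn]
  have han_le : a n ^ p ≤ ∑ k ∈ Finset.range (n + 1), a k ^ p :=
    Finset.single_le_sum (f := fun k => a k ^ p)
      (fun k _ => Real.rpow_nonneg (ha0 k) p) (Finset.self_mem_range_succ n)
  have hS0nonneg : (0:ℝ) ≤ ∑ k ∈ Finset.range (n + 1), a k ^ p :=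
    Finset.sum_nonneg fun k _ => Real.rpow_nonneg (ha0 k) p
  have hchain_sum : ∑ k ∈ Finset.range (n + 2), dist (c k) (c (k + 1)) ^ p ≤
      3 * 2 ^ p * ∑ k ∈ Finset.range (n + 1), a k ^ p := by
    calc ∑ k ∈ Finset.range (n + 2), dist (c k) (c (k + 1)) ^ p
        ≤ ∑ k ∈ Finset.range (n + 2), 2 ^ p * (a' k ^ p + a' (k + 1) ^ p) :=
          Finset.sum_le_sum fun k hk => hterm k (Finset.mem_range.mp hk)
      _ = 2 ^ p * ((∑ k ∈ Finset.range (n + 2), a' k ^ p) +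
            ∑ k ∈ Finset.range (n + 2), a' (k + 1) ^ p) := by
          rw [← Finset.mul_sum, Finset.sum_add_distrib]
      _ ≤ 3 * 2 ^ p * ∑ k ∈ Finset.range (n + 1), a k ^ p := by
          rw [hsum1, hsum2, hanp]
          nlinarith
  have hS0 : ∑ k ∈ Finset.range (n + 1), a k ^ p ≤ ∑ v ∈ F, r v ^ p := by
    have h1 : ∑ k ∈ Finset.range (n + 1), a k ^ p =
        (P.support.map (fun v => r v ^ p)).sum := by
      have h := list_sum_getD (fun v => r v ^ p) j₁ P.support
      rw [hlen] at h
      rw [← h]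
    rw [h1, ← List.sum_toFinset _ hnd]
    apply Finset.sum_le_sum_of_subset_of_nonneg
    · intro v hv
      exact hsupF v (List.mem_toFinset.mp hv)
    · intro v _ _
      exact Real.rpow_nonneg (hr0 v).le p
  refine ⟨n + 2, c, hc0, hcend, ?_⟩
  calc ∑ i ∈ Finset.range (n + 2), dist (c i) (c (i + 1)) ^ p
      ≤ 3 * 2 ^ p * ∑ k ∈ Finset.range (n + 1), a k ^ p := hchain_sum
    _ ≤ 3 * 2 ^ p * ∑ v ∈ F, r v ^ p :=
        mul_le_mul_of_nonneg_left hS0 (by positivity)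
    _ ≤ 3 * 2 ^ p * (2 ^ p * (η + η)) :=
        mul_le_mul_of_nonneg_left hS (by positivity)
    _ = B * (2 * η) := by rw [hB_def]; ring
    _ ≤ ε := by
        have h1 : B * (2 * η) ≤ B * (2 * (ε / (2 * B))) := by
          have h2 : 2 * η ≤ 2 * (ε / (2 * B)) := by linarith
          exact mul_le_mul_of_nonneg_left h2 hB0.le
        have h2 : B * (2 * (ε / (2 * B))) = ε := by
          field_simp
        linarith

/-- The `p`-chain construction `d^{(p)}`: the infimum over finite chains
`x = x_0, x_1, …, x_n = x'` of `(Σ_i d(x_i, x_{i+1})^p)^(1/p)`. -/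
def chainP {X : Type*} [MetricSpace X] (p : ℝ) (x x' : X) : ℝ :=
  sInf {r : ℝ | ∃ n : ℕ, ∃ c : ℕ → X, c 0 = x ∧ c n = x' ∧
    (∑ i ∈ Finset.range n, dist (c i) (c (i + 1)) ^ p) ^ (1 / p) = r}

/-- Every compact `1`-connected metric space (any two points lie in a common closed
connected subset of Hausdorff dimension `1`) lies in the kernel of the projection `𝔖_p`
for every `p > 1`: `d^{(p)}(x,x') = 0` for all `x, x'`. -/
theorem oneConnected_in_kernel (X : Type) [MetricSpace X] [CompactSpace X]
    (h1conn : ∀ x x' : X, ∃ C : Set X,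
      IsClosed C ∧ IsConnected C ∧ x ∈ C ∧ x' ∈ C ∧ dimH C = 1) :
    ∀ p : ℝ, 1 < p → ∀ x x' : X, chainP p x x' = 0 := by
  intro p hp x x'
  obtain ⟨C, hCclosed, hCconn, hxC, hx'C, hdim⟩ := h1conn x x'
  have hp0 : (0:ℝ) < p := by linarith
  have hchain : chainP p x x' = sInf {r : ℝ | ∃ n : ℕ, ∃ c : ℕ → X, c 0 = x ∧ c n = x' ∧
      (∑ i ∈ Finset.range n, dist (c i) (c (i + 1)) ^ p) ^ (1 / p) = r} := rfl
  set S := {r : ℝ | ∃ n : ℕ, ∃ c : ℕ → X, c 0 = x ∧ c n = x' ∧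
    (∑ i ∈ Finset.range n, dist (c i) (c (i + 1)) ^ p) ^ (1 / p) = r} with hS_def
  have hnonneg : ∀ r ∈ S, 0 ≤ r := by
    intro r hr
    obtain ⟨n, c, _, _, hrc⟩ := hr
    rw [← hrc]
    exact Real.rpow_nonneg
      (Finset.sum_nonneg fun i _ => Real.rpow_nonneg dist_nonneg p) _
  have hbdd : BddBelow S := ⟨0, hnonneg⟩
  have hS_ne : S.Nonempty :=
    ⟨_, 1, fun k => if k = 0 then x else x', by simp, by simp, rfl⟩
  have hge : 0 ≤ chainP p x x' := by
    rw [hchain]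
    exact le_csInf hS_ne hnonneg
  have hle : ∀ ε : ℝ, 0 < ε → chainP p x x' ≤ ε := by
    intro ε hε
    obtain ⟨n, c, hc0, hcn, hsum⟩ := exists_chain_small hCclosed hCconn hxC hx'C hdim hp
      (show (0:ℝ) < ε ^ p from Real.rpow_pos_of_pos hε p)
    have hmem : (∑ i ∈ Finset.range n, dist (c i) (c (i + 1)) ^ p) ^ (1 / p) ∈ S :=
      ⟨n, c, hc0, hcn, rfl⟩
    have hval : (∑ i ∈ Finset.range n, dist (c i) (c (i + 1)) ^ p) ^ (1 / p) ≤ ε := by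
      have h1 : (∑ i ∈ Finset.range n, dist (c i) (c (i + 1)) ^ p) ^ (1 / p) ≤
          (ε ^ p) ^ (1 / p) :=
        Real.rpow_le_rpow
          (Finset.sum_nonneg fun i _ => Real.rpow_nonneg dist_nonneg p) hsum
          (by positivity)
      rwa [← Real.rpow_mul hε.le, mul_one_div, div_self hp0.ne', Real.rpow_one] at h1
    rw [hchain]
    exact (csInf_le hbdd hmem).trans hval
  by_contra hne
  have hpos : 0 < chainP p x x' := lt_of_le_of_ne hge (Ne.symm hne)
  have := hle (chainP p x x' / 2) (by linarith)
  linarith
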